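/- Let X be a complete locally compact length space with basepoint x, let R > 0, and suppose δ ∈ CovSpec^R_cut(X,x). Then there exist a sequence (δ_j) strictly decreasing to δ and rectifiable loops σ_j in X with length L(σ_j) < 2δ_j such that for each j the homotopy class of α_j⁻¹·σ_j·α_j (for a path α_j from x to σ_j(0)) does not lie in π₁^{cut}(X,δ,R,x); that is, σ_j is not δ-homotopic to a collection of loops lying outside the closed ball B̄(x,R). -/

import Mathlib

/- Common definitions: path length, length/geodesic spaces, δ-covering groups,
   covering spectra, cut-off covering groups and spectra, free homotopy,
   loops-to-infinity. -/

open Metric Filter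
open scoped NNReal ENNReal unitInterval

attribute [local instance] Path.Homotopic.setoid

/-- The length (total variation) of a path in a metric space. -/
noncomputable def pathLength {X : Type*} [MetricSpace X] {x y : X} (γ : Path x y) : ℝ≥0∞ :=
  eVariationOn γ Set.univ

/-- A metric space is a length space if the distance between any two points is the
infimum of the lengths of paths joining them. -/
def IsLengthSpace (X : Type*) [MetricSpace X] : Prop :=
  ∀ x y : X, ENNReal.ofReal (dist x y) = ⨅ γ : Path x y, pathLength γ

/-- A metric space is a geodesic space if any two points are joined by a
distance-realizing path. -/
def IsGeodesicSpace (X : Type*) [MetricSpace X] : Prop :=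
  ∀ x y : X, ∃ γ : Path x y, pathLength γ = ENNReal.ofReal (dist x y)

/-- The element of the fundamental group at `p` represented by the loop
`α⁻¹ · β · α` (i.e. follow `α` from `p` to `y`, the loop `β` at `y`, then `α` back). -/
noncomputable def loopClass {X : Type*} [TopologicalSpace X] {p y : X}
    (α : Path p y) (β : Path y y) : FundamentalGroup X p :=
  FundamentalGroup.fromPath (X := TopCat.of X) ⟦(α.trans β).trans α.symm⟧

/-- The δ-covering group `π₁(X, δ, p)`: the normal subgroup of `π₁(X,p)` generated by
classes of loops `α⁻¹·β·α` with `β` lying in some open ball of radius `δ`. -/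
noncomputable def coveringGroup (X : Type*) [MetricSpace X] (p : X) (δ : ℝ) :
    Subgroup (FundamentalGroup X p) :=
  Subgroup.normalClosure
    {g | ∃ (y : X) (β : Path y y) (α : Path p y),
      (∃ c : X, ∀ t, β t ∈ Metric.ball c δ) ∧ g = loopClass α β}

/-- The covering spectrum of `X` (with basepoint `p`). -/
def covSpec (X : Type*) [MetricSpace X] (p : X) : Set ℝ :=
  {δ | 0 < δ ∧ ∀ δ' > δ, coveringGroup X p δ' ≠ coveringGroup X p δ}

/-- The `R` cut-off δ-covering group `π₁^{cut}(X, δ, R, x)`: the normal subgroup of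
`π₁(X,x)` generated by classes of loops `α⁻¹·β·α` with `β` lying in some open ball of
radius `δ` or in the complement of the closed ball `B̄(x,R)`. -/
noncomputable def cutCoveringGroup (X : Type*) [MetricSpace X] (x : X) (δ R : ℝ) :
    Subgroup (FundamentalGroup X x) :=
  Subgroup.normalClosure
    {g | ∃ (y : X) (β : Path y y) (α : Path x y),
      ((∃ c : X, ∀ t, β t ∈ Metric.ball c δ) ∨ (∀ t, β t ∉ Metric.closedBall x R)) ∧
      g = loopClass α β}

/-- The `R` cut-off covering spectrum of `(X,x)`. -/
def cutCovSpec (X : Type*) [MetricSpace X] (x : X) (R : ℝ) : Set ℝ :=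
  {δ | 0 < δ ∧ ∀ δ' > δ, cutCoveringGroup X x δ' R ≠ cutCoveringGroup X x δ R}

/-- Two loops are freely homotopic: there is a homotopy through (not necessarily
based) loops from one to the other. -/
def FreelyHomotopic {X : Type*} [TopologicalSpace X] {a b : X}
    (γ₀ : Path a a) (γ₁ : Path b b) : Prop :=
  ∃ H : C(I × I, X),
    (∀ t, H (0, t) = γ₀ t) ∧ (∀ t, H (1, t) = γ₁ t) ∧ ∀ s, H (s, 0) = H (s, 1)

/-- Two loops are freely homotopic within a subset `A`: the homotopy stays in `A`. -/
def FreelyHomotopicIn {X : Type*} [TopologicalSpace X] (A : Set X) {a b : X}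
    (γ₀ : Path a a) (γ₁ : Path b b) : Prop :=
  ∃ H : C(I × I, X),
    (∀ t, H (0, t) = γ₀ t) ∧ (∀ t, H (1, t) = γ₁ t) ∧ (∀ s, H (s, 0) = H (s, 1)) ∧
    ∀ p, H p ∈ A

/-- A loop has the loops-to-infinity property: for every compact set it is freely
homotopic to a loop outside that set. -/
def LoopToInfinity {X : Type*} [TopologicalSpace X] {a : X} (γ : Path a a) : Prop :=
  ∀ K : Set X, IsCompact K →
    ∃ (b : X) (η : Path b b), (∀ t, η t ∉ K) ∧ FreelyHomotopic γ η

/-- A space has the loops-to-infinity property if all of its loops do. -/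
def LoopsToInfinity (X : Type*) [TopologicalSpace X] : Prop :=
  ∀ (a : X) (γ : Path a a), LoopToInfinity γ

/-- Concatenation of a finite list of loops based at `q`. -/
noncomputable def loopConcat {X : Type*} [TopologicalSpace X] (q : X) :
    List (Path q q) → Path q q
  | [] => Path.refl q
  | γ :: rest => γ.trans (loopConcat q rest)

/-- A space is semilocally simply connected if every point has a neighborhood in which
every loop is null-homotopic in the whole space. -/
def SemilocallySimplyConnected (X : Type*) [TopologicalSpace X] : Prop :=
  ∀ x : X, ∃ U ∈ nhds x, ∀ (y : X) (γ : Path y y), (∀ t, γ t ∈ U) →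
    γ.Homotopic (Path.refl y)

/-- A pointed ε-Hausdorff approximation. -/
def IsPointedHausdorffApprox {Z₁ Z₂ : Type*} [MetricSpace Z₁] [MetricSpace Z₂]
    (f : Z₁ → Z₂) (p₁ : Z₁) (p₂ : Z₂) (ε : ℝ) : Prop :=
  f p₁ = p₂ ∧ (∀ a b : Z₁, |dist (f a) (f b) - dist a b| < ε) ∧
    ∀ z : Z₂, ∃ a : Z₁, dist z (f a) ≤ ε

instance coveringGroup_normal (X : Type*) [MetricSpace X] (p : X) (δ : ℝ) :
    (coveringGroup X p δ).Normal :=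
  Subgroup.normalClosure_normal

instance cutCoveringGroup_normal (X : Type*) [MetricSpace X] (x : X) (δ R : ℝ) :
    (cutCoveringGroup X x δ R).Normal :=
  Subgroup.normalClosure_normal
open CategoryTheory

section PathBasics
variable {X : Type*} [TopologicalSpace X] {u v w : X}

lemma Path.eq_of_fun_eq {γ₁ γ₂ : Path u v} (h : ∀ t, γ₁ t = γ₂ t) : γ₁ = γ₂ := by
  cases γ₁; cases γ₂
  congr 1
  exact ContinuousMap.ext h

/-- The "segment" of a path between parameters `a` and `b`, with adjustable endpoints. -/
noncomputable def seg (γ : Path u v) (a b : ℝ) {u' v' : X}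
    (hu : γ.extend a = u') (hv : γ.extend b = v') : Path u' v' where
  toFun := fun t => γ.extend (a + (t : ℝ) * (b - a))
  continuous_toFun := γ.continuous_extend.comp (by continuity)
  source' := by
    show γ.extend (a + ((0 : I) : ℝ) * (b - a)) = u'
    rw [show a + ((0 : I) : ℝ) * (b - a) = a by norm_num]; exact hu
  target' := by
    show γ.extend (a + ((1 : I) : ℝ) * (b - a)) = v'
    rw [show a + ((1 : I) : ℝ) * (b - a) = b by norm_num]; exact hv

@[simp] lemma seg_apply (γ : Path u v) (a b : ℝ) {u' v' : X}
    (hu : γ.extend a = u') (hv : γ.extend b = v') (t : I) :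
    seg γ a b hu hv t = γ.extend (a + (t : ℝ) * (b - a)) := rfl

/-- Two paths obtained by composing a path's `extend` with continuous real functions with
matching endpoints are homotopic. -/
lemma homotopic_of_extend_comp (γ : Path u v) {a b : X} (p q : Path a b) (f g : I → ℝ)
    (hf : Continuous f) (hg : Continuous g)
    (hp : ∀ t, p t = γ.extend (f t)) (hq : ∀ t, q t = γ.extend (g t))
    (h0 : f 0 = g 0) (h1 : f 1 = g 1) : p.Homotopic q := by
  refine ⟨{ toFun := fun st => γ.extend ((1 - (st.1 : ℝ)) * f st.2 + (st.1 : ℝ) * g st.2)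
            continuous_toFun := γ.continuous_extend.comp (by continuity)
            map_zero_left := ?_, map_one_left := ?_, prop' := ?_ }⟩
  · intro t; simp [hp t]
  · intro t; simp [hq t]
  · rintro s t (rfl | rfl)
    · have : (1 - (s : ℝ)) * f 0 + (s : ℝ) * g 0 = f 0 := by rw [h0]; ring
      simp only [ContinuousMap.coe_mk, this]
      exact (hp 0).symm
    · have : (1 - (s : ℝ)) * f 1 + (s : ℝ) * g 1 = f 1 := by rw [h1]; ring
      simp only [ContinuousMap.coe_mk, this]
      exact (hp 1).symm

/-- Concatenating two segments of a path is homotopic to the single segment. -/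
lemma seg_trans_homotopic (γ : Path u v) (a m b : ℝ) :
    ((seg γ a m rfl rfl).trans (seg γ m b rfl rfl)).Homotopic (seg γ a b rfl rfl) := by
  apply homotopic_of_extend_comp γ _ _
    (fun t => if (t : ℝ) ≤ 1/2 then a + (2 * (t:ℝ)) * (m - a) else m + (2 * (t:ℝ) - 1) * (b - m))
    (fun t => a + (t : ℝ) * (b - a))
  · apply Continuous.if_le
    · continuity
    · continuity
    · continuity
    · continuity
    · intro t ht; rw [ht]; ring
  · continuity
  · intro t
    rw [Path.trans_apply]
    split_ifs with h
    · simp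
    · simp
  · intro t; simp
  · norm_num
  · norm_num
end PathBasics
section LengthLemmas
variable {X : Type*} [MetricSpace X] {u v w : X}

lemma pathLength_eq_extend (γ : Path u v) :
    pathLength γ = eVariationOn γ.extend (Set.Icc (0:ℝ) 1) := by
  have himg : Set.projIcc (0:ℝ) 1 zero_le_one '' Set.Icc 0 1 = Set.univ := by
    apply Set.eq_univ_iff_forall.2
    intro s
    exact ⟨(s : ℝ), s.2, by simp [Set.projIcc_of_mem]⟩
  have h := eVariationOn.comp_eq_of_monotoneOn (⇑γ) (t := Set.Icc (0:ℝ) 1)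
    (Set.projIcc (0:ℝ) 1 zero_le_one)
    ((Set.monotone_projIcc zero_le_one).monotoneOn _)
  rw [himg] at h
  exact h.symm

lemma pathLength_cast (γ : Path u v) {u' v' : X} (hu : u' = u) (hv : v' = v) :
    pathLength (γ.cast hu hv) = pathLength γ := by
  unfold pathLength
  apply eVariationOn.eq_of_eqOn
  intro t _
  simp [Path.cast_coe]

lemma pathLength_symm (γ : Path u v) : pathLength γ.symm = pathLength γ := by
  unfold pathLength
  have h1 : Set.EqOn (⇑γ.symm) (⇑γ ∘ unitInterval.symm) Set.univ := fun t _ => rfl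
  rw [eVariationOn.eq_of_eqOn h1]
  have h2 := eVariationOn.comp_eq_of_antitoneOn (⇑γ) (t := (Set.univ : Set I)) (unitInterval.symm)
    (fun a _ b _ hab => unitInterval.symm_le_symm.2 hab)
  rw [h2]
  congr 1
  apply Set.eq_univ_iff_forall.2
  intro s
  exact ⟨unitInterval.symm s, trivial, unitInterval.symm_symm s⟩

lemma pathLength_trans_le (γ : Path u v) (γ' : Path v w) :
    pathLength (γ.trans γ') ≤ pathLength γ + pathLength γ' := by
  have hsplit : pathLength (γ.trans γ') = eVariationOn (⇑(γ.trans γ'))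
      (Set.Iic (⟨1/2, by norm_num⟩ : I) ∪ Set.Ici ⟨1/2, by norm_num⟩) := by
    unfold pathLength; rw [Set.Iic_union_Ici]
  rw [hsplit, eVariationOn.union _ (isGreatest_Iic) (isLeast_Ici)]
  gcongr
  · have h1 : Set.EqOn (⇑(γ.trans γ')) (γ.extend ∘ fun t : I => 2 * (t:ℝ))
        (Set.Iic ⟨1/2, by norm_num⟩) := by
      intro t ht
      show (if (t:ℝ) ≤ 1/2 then γ.extend (2 * t) else γ'.extend (2 * (t:ℝ) - 1)) = γ.extend (2*t)
      rw [if_pos (by exact_mod_cast ht)]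
    rw [eVariationOn.eq_of_eqOn h1]
    have h := eVariationOn.comp_le_of_monotoneOn (γ.extend) (s := Set.Icc (0:ℝ) 1)
      (fun t : I => 2 * (t:ℝ))
      (fun a _ b _ hab => by have h' : (a:ℝ) ≤ b := hab; dsimp only []; linarith)
      (fun t ht => by
        have h1 := t.2.1
        have h2 : (t:ℝ) ≤ 1/2 := ht
        exact Set.mem_Icc.2 ⟨show (0:ℝ) ≤ 2*(t:ℝ) by positivity,
          show 2*(t:ℝ) ≤ 1 by linarith⟩)
    calc _ ≤ eVariationOn γ.extend (Set.Icc 0 1) := h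
    _ = _ := (pathLength_eq_extend γ).symm
  · have h1 : Set.EqOn (⇑(γ.trans γ')) (γ'.extend ∘ fun t : I => 2 * (t:ℝ) - 1)
        (Set.Ici ⟨1/2, by norm_num⟩) := by
      intro t ht
      show (if (t:ℝ) ≤ 1/2 then γ.extend (2 * t) else γ'.extend (2 * (t:ℝ) - 1))
        = γ'.extend (2*(t:ℝ) - 1)
      have ht' : (1/2 : ℝ) ≤ (t:ℝ) := ht
      rcases lt_or_eq_of_le ht' with h | h
      · rw [if_neg (by linarith)]
      · rw [if_pos (by linarith), ← h]
        norm_num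
    rw [eVariationOn.eq_of_eqOn h1]
    have h := eVariationOn.comp_le_of_monotoneOn (γ'.extend) (s := Set.Icc (0:ℝ) 1)
      (fun t : I => 2 * (t:ℝ) - 1)
      (fun a _ b _ hab => by have h' : (a:ℝ) ≤ b := hab; dsimp only []; linarith)
      (fun t ht => by
        have h1 := t.2.2
        have h2 : (1/2:ℝ) ≤ (t:ℝ) := ht
        exact Set.mem_Icc.2 ⟨show (0:ℝ) ≤ 2*(t:ℝ)-1 by linarith,
          show 2*(t:ℝ)-1 ≤ 1 by linarith⟩)
    calc _ ≤ eVariationOn γ'.extend (Set.Icc 0 1) := h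
    _ = _ := (pathLength_eq_extend γ').symm

lemma dist_le_pathLength (γ : Path u v) (s t : I) :
    ENNReal.ofReal (dist (γ s) (γ t)) ≤ pathLength γ := by
  rw [← edist_dist]
  exact eVariationOn.edist_le _ trivial trivial

lemma exists_path_length_lt (hX : IsLengthSpace X) {r : ℝ} (h : dist u v < r) :
    ∃ γ : Path u v, pathLength γ < ENNReal.ofReal r := by
  have h0 : (0:ℝ) < r := lt_of_le_of_lt dist_nonneg h
  by_contra hc
  push_neg at hc
  have h2 : ENNReal.ofReal r ≤ ⨅ γ : Path u v, pathLength γ := le_iInf hc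
  rw [← hX u v] at h2
  exact absurd (lt_of_lt_of_le ((ENNReal.ofReal_lt_ofReal_iff h0).2 h) h2) (lt_irrefl _)
end LengthLemmas
section LoopClassLemmas
open CategoryTheory
variable {X : Type*} [TopologicalSpace X] {x y : X}

/-- A path class as an arrow in the fundamental groupoid. -/
noncomputable def pc {u v : X} (p : Path u v) :
    (FundamentalGroupoid.mk u) ⟶ (FundamentalGroupoid.mk v) := ⟦p⟧

lemma pc_trans {u v w : X} (p : Path u v) (q : Path v w) :
    pc (p.trans q) = pc p ≫ pc q := by
  rfl

lemma pc_symm {u v : X} (p : Path u v) : pc p.symm = Groupoid.inv (pc p) := rfl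

lemma pc_sound {u v : X} {p q : Path u v} (h : p.Homotopic q) : pc p = pc q :=
  Quotient.sound h

/-- An element of the fundamental group as an arrow. -/
abbrev FundamentalGroup.hom (a : FundamentalGroup X x) :
    FundamentalGroupoid.mk x ⟶ FundamentalGroupoid.mk x := a

lemma FundamentalGroup.hom_ext {a b : FundamentalGroup X x} (h : a.hom = b.hom) : a = b :=
  h

lemma loopClass_hom (α : Path x y) (β : Path y y) :
    (loopClass α β).hom = (pc α ≫ pc β) ≫ Groupoid.inv (pc α) := by
  show pc ((α.trans β).trans α.symm) = _
  rw [pc_trans, pc_trans, pc_symm]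

lemma fg_mul_hom (a b : FundamentalGroup X x) : (a * b).hom = b.hom ≫ a.hom := rfl

lemma fg_inv_hom (a : FundamentalGroup X x) : (a⁻¹).hom = Groupoid.inv a.hom := by
  rfl

lemma loopClass_congr (α : Path x y) {β₁ β₂ : Path y y} (h : β₁.Homotopic β₂) :
    loopClass α β₁ = loopClass α β₂ := by
  apply FundamentalGroup.hom_ext
  rw [loopClass_hom, loopClass_hom, pc_sound h]

lemma loopClass_conj (α α' : Path x y) (β : Path y y) :
    ∃ g : FundamentalGroup X x, loopClass α' β = g * loopClass α β * g⁻¹ := by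
  refine ⟨FundamentalGroup.fromArrow (X := TopCat.of X) (pc α ≫ Groupoid.inv (pc α')), ?_⟩
  apply FundamentalGroup.hom_ext
  rw [fg_mul_hom, fg_mul_hom, fg_inv_hom, loopClass_hom, loopClass_hom]
  show _ = Groupoid.inv (pc α ≫ Groupoid.inv (pc α')) ≫
    (((pc α ≫ pc β) ≫ Groupoid.inv (pc α)) ≫ (pc α ≫ Groupoid.inv (pc α')))
  simp [Groupoid.inv_eq_inv, Category.assoc]

lemma loopClass_mem_iff {N : Subgroup (FundamentalGroup X x)} [hN : N.Normal]
    (α α' : Path x y) (β : Path y y) : loopClass α β ∈ N ↔ loopClass α' β ∈ N := by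
  constructor
  · intro h
    obtain ⟨g, hg⟩ := loopClass_conj α α' β
    rw [hg]
    exact hN.conj_mem _ h _
  · intro h
    obtain ⟨g, hg⟩ := loopClass_conj α' α β
    rw [hg]
    exact hN.conj_mem _ h _
end LoopClassLemmas
section Identities
open CategoryTheory
variable {X : Type*} [TopologicalSpace X] {x c : X}

lemma ident_D {d e : X} (αc : Path x c) (pk : Path c d) (pk1 : Path c e)
    (sk : Path d e) (qk : Path d e) :
    loopClass αc ((pk.trans sk).trans pk1.symm) =
      loopClass (αc.trans pk1) (qk.symm.trans sk) *
        loopClass αc ((pk.trans (qk.trans pk1.symm))) := by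
  apply FundamentalGroup.hom_ext
  rw [fg_mul_hom, loopClass_hom, loopClass_hom, loopClass_hom]
  simp only [pc_trans, pc_symm]
  simp [Groupoid.inv_eq_inv, Category.assoc]

lemma ident_step {a0 ak ak1 : X} (αc : Path x c) (p0 : Path c a0) (pk : Path c ak)
    (pk1 : Path c ak1) (s1 : Path a0 ak) (s2 : Path ak ak1) (s3 : Path a0 ak1)
    (hs : pc s1 ≫ pc s2 = pc s3) :
    loopClass αc ((p0.trans s3).trans pk1.symm) =
      loopClass αc ((pk.trans s2).trans pk1.symm) *
        loopClass αc ((p0.trans s1).trans pk.symm) := by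
  apply FundamentalGroup.hom_ext
  rw [fg_mul_hom, loopClass_hom, loopClass_hom, loopClass_hom]
  simp only [pc_trans, pc_symm, ← hs]
  simp [Groupoid.inv_eq_inv, Category.assoc]

lemma ident_final {w : X} (αc : Path x c) (p0 pn : Path c w) (β : Path w w) :
    loopClass (αc.trans p0) β =
      (loopClass αc (p0.trans pn.symm))⁻¹ *
        loopClass αc ((p0.trans β).trans pn.symm) := by
  apply FundamentalGroup.hom_ext
  rw [fg_mul_hom, fg_inv_hom, loopClass_hom, loopClass_hom, loopClass_hom]
  simp only [pc_trans, pc_symm]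
  simp [Groupoid.inv_eq_inv, Category.assoc]

lemma Path.extend_congr' {u v u' v' : X} {γ₁ : Path u v} {γ₂ : Path u' v'}
    (h : ∀ t : I, γ₁ t = γ₂ t) (s : ℝ) : γ₁.extend s = γ₂.extend s := by
  show γ₁ _ = γ₂ _
  exact h _

lemma trans_fun_congr {a b c' a' b' c''' : X}
    {γ₁ : Path a b} {γ₁' : Path a' b'} {γ₂ : Path b c'} {γ₂' : Path b' c'''}
    (h1 : ∀ t, γ₁ t = γ₁' t) (h2 : ∀ t, γ₂ t = γ₂' t) (t : I) :
    (γ₁.trans γ₂) t = (γ₁'.trans γ₂') t := by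
  show (if (t:ℝ) ≤ 1/2 then γ₁.extend (2*t) else γ₂.extend (2*(t:ℝ)-1))
    = (if (t:ℝ) ≤ 1/2 then γ₁'.extend (2*t) else γ₂'.extend (2*(t:ℝ)-1))
  split_ifs
  · exact Path.extend_congr' h1 _
  · exact Path.extend_congr' h2 _

lemma pathLength_seg_self {Y : Type*} [MetricSpace Y] {u v u' v' : Y} (γ : Path u v) (a : ℝ)
    (hu : γ.extend a = u') (hv : γ.extend a = v') :
    pathLength (seg γ a a hu hv) = 0 := by
  apply eVariationOn.constant_on
  rintro p ⟨s, _, rfl⟩ q ⟨s', _, rfl⟩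
  simp [seg_apply]
end Identities
section GroupLemmas
variable {X : Type*} [MetricSpace X] {x : X}

lemma mem_cutCoveringGroup_of_ball {y : X} {δ R : ℝ} (γ : Path y y) (α : Path x y) (c : X)
    (h : ∀ t, γ t ∈ Metric.ball c δ) : loopClass α γ ∈ cutCoveringGroup X x δ R :=
  Subgroup.subset_normalClosure ⟨y, γ, α, Or.inl ⟨c, h⟩, rfl⟩

lemma cutCoveringGroup_mono {δ δ' R : ℝ} (h : δ ≤ δ') :
    cutCoveringGroup X x δ R ≤ cutCoveringGroup X x δ' R := by
  apply Subgroup.normalClosure_mono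
  rintro g ⟨y, β, α, hcond, rfl⟩
  refine ⟨y, β, α, ?_, rfl⟩
  rcases hcond with ⟨c, hc⟩ | hc
  · exact Or.inl ⟨c, fun t => Metric.ball_subset_ball h (hc t)⟩
  · exact Or.inr hc

lemma exists_bad_generator {δ δ' R : ℝ} (hδδ' : δ ≤ δ')
    (hne : cutCoveringGroup X x δ' R ≠ cutCoveringGroup X x δ R) :
    ∃ (y : X) (β : Path y y) (α : Path x y) (c : X),
      (∀ t, β t ∈ Metric.ball c δ') ∧ loopClass α β ∉ cutCoveringGroup X x δ R := by
  by_contra hcontra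
  push_neg at hcontra
  apply hne
  apply le_antisymm
  · apply Subgroup.normalClosure_le_normal
    rintro g ⟨y, β, α, hcond, rfl⟩
    rcases hcond with ⟨c, hcball⟩ | hout
    · exact hcontra y β α c hcball
    · exact Subgroup.subset_normalClosure ⟨y, β, α, Or.inr hout, rfl⟩
  · exact cutCoveringGroup_mono hδδ'
end GroupLemmas

section Core
open CategoryTheory

lemma core_short_loop {X : Type*} [MetricSpace X] (hX : IsLengthSpace X) (x : X)
    {δ δ' δ'' R : ℝ} (hδ : 0 < δ) (h1 : δ' < δ'') (h2 : 0 < δ')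
    {y : X} (β : Path y y) (α : Path x y) (c : X) (hβ : ∀ t, β t ∈ Metric.ball c δ')
    (hnot : loopClass α β ∉ cutCoveringGroup X x δ R) :
    ∃ (w : X) (τ : Path w w) (α' : Path x w),
      pathLength τ < ENNReal.ofReal (2 * δ'') ∧
        loopClass α' τ ∉ cutCoveringGroup X x δ R := by
  by_contra hcon
  push_neg at hcon
  apply hnot
  -- the small parameter
  set ε := min δ ((δ'' - δ')/2) with hεdef
  have hεpos : 0 < ε := lt_min hδ (by linarith)
  have hεδ : ε ≤ δ := min_le_left _ _
  have hkey : 2*δ' + 3*ε < 2*δ'' := by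
    have h3 : ε ≤ (δ'' - δ')/2 := min_le_right _ _
    linarith
  have haux : 0 < δ' + ε := by linarith
  -- uniform continuity of β
  have hUC : UniformContinuous (⇑β) := CompactSpace.uniformContinuous_of_continuous β.continuous
  obtain ⟨δI, hδIpos, hδI⟩ := Metric.uniformContinuous_iff.1 hUC ε hεpos
  obtain ⟨n0, hn0⟩ := exists_nat_one_div_lt hδIpos
  set n : ℕ := n0 + 1 with hndef
  have hnpos : (0:ℝ) < (n:ℝ) := by positivity
  have hfine : ∀ u v : ℝ, |u - v| ≤ 1/(n:ℝ) → dist (β.extend u) (β.extend v) < ε := by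
    intro u v huv
    apply hδI
    have hlip := (LipschitzWith.projIcc (zero_le_one' ℝ)).dist_le_mul u v
    simp only [NNReal.coe_one, one_mul] at hlip
    calc dist (Set.projIcc (0:ℝ) 1 zero_le_one u) (Set.projIcc (0:ℝ) 1 zero_le_one v)
        ≤ dist u v := hlip
      _ = |u - v| := Real.dist_eq u v
      _ ≤ 1/(n:ℝ) := huv
      _ < δI := by
          rw [hndef]
          push_cast
          exact hn0
  set t : ℕ → ℝ := fun i => (i:ℝ)/n with htdef
  have hstep : ∀ i : ℕ, t (i+1) - t i = 1/(n:ℝ) := by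
    intro i
    rw [htdef]
    push_cast
    ring
  have hmemball : ∀ s : ℝ, β.extend s ∈ Metric.ball c δ' := fun s => hβ _
  -- the near-geodesics from c to the partition points
  have hpex : ∀ i : ℕ, ∃ γ : Path c (β.extend (t i)),
      pathLength γ < ENNReal.ofReal (δ' + ε) := by
    intro i
    apply exists_path_length_lt hX
    have hb := hmemball (t i)
    rw [Metric.mem_ball] at hb
    rw [dist_comm]
    linarith
  choose p hp using hpex
  -- the short chords
  have hqex : ∀ i : ℕ, ∃ γ : Path (β.extend (t i)) (β.extend (t (i+1))),
      pathLength γ < ENNReal.ofReal ε := by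
    intro i
    apply exists_path_length_lt hX
    apply hfine
    rw [show t i - t (i+1) = -(1/(n:ℝ)) by rw [← hstep i]; ring, abs_neg, abs_of_pos (by positivity)]
  choose q hq using hqex
  -- endpoint identifications
  have e0 : β.extend (t 0) = y := by
    rw [show t 0 = 0 by simp [htdef], Path.extend_zero]
  have en : β.extend (t n) = y := by
    rw [show t n = 1 by rw [htdef]; field_simp, Path.extend_one]
  set pc0 : Path c y := (p 0).cast rfl e0.symm with hpc0
  set pcn : Path c y := (p n).cast rfl en.symm with hpcn
  set αc : Path x c := α.trans pc0.symm with hαc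
  -- all points of each chord stay δ-close to the left endpoint
  have hqball : ∀ (i : ℕ) (u : I), q i u ∈ Metric.ball (β.extend (t i)) δ := by
    intro i u
    rw [Metric.mem_ball]
    have hd : ENNReal.ofReal (dist (q i u) (q i 0)) ≤ pathLength (q i) :=
      dist_le_pathLength _ _ _
    have hd2 : ENNReal.ofReal (dist (q i u) (q i 0)) < ENNReal.ofReal ε :=
      lt_of_le_of_lt hd (hq i)
    rw [ENNReal.ofReal_lt_ofReal_iff hεpos] at hd2
    calc dist (q i u) (β.extend (t i)) = dist (q i u) (q i 0) := by rw [(q i).source]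
      _ < ε := hd2
      _ ≤ δ := hεδ
  -- the inductive family of loops at c
  have hmem : ∀ k : ℕ,
      loopClass αc (((p 0).trans (seg β (t 0) (t k) rfl rfl)).trans (p k).symm) ∈
        cutCoveringGroup X x δ R := by
    intro k
    induction k with
    | zero =>
      apply hcon
      have hb1 := pathLength_trans_le (p 0) (seg β (t 0) (t 0) rfl rfl)
      have hb2 := pathLength_trans_le ((p 0).trans (seg β (t 0) (t 0) rfl rfl)) (p 0).symm
      rw [pathLength_seg_self] at hb1
      rw [pathLength_symm] at hb2
      calc pathLength _ ≤ (pathLength (p 0) + 0) + pathLength (p 0) := by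
            exact le_trans hb2 (add_le_add_left hb1 _)
        _ = pathLength (p 0) + pathLength (p 0) := by rw [add_zero]
        _ < ENNReal.ofReal (δ' + ε) + ENNReal.ofReal (δ' + ε) :=
            ENNReal.add_lt_add (hp 0) (hp 0)
        _ = ENNReal.ofReal ((δ' + ε) + (δ' + ε)) := by rw [ENNReal.ofReal_add haux.le haux.le]
        _ ≤ ENNReal.ofReal (2 * δ'') := ENNReal.ofReal_le_ofReal (by linarith)
    | succ k ih =>
      have hs : pc (seg β (t 0) (t k) rfl rfl) ≫ pc (seg β (t k) (t (k+1)) rfl rfl)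
          = pc (seg β (t 0) (t (k+1)) rfl rfl) := by
        rw [← pc_trans]
        exact pc_sound (seg_trans_homotopic β _ _ _)
      rw [ident_step αc (p 0) (p k) (p (k+1)) _ _ _ hs]
      refine mul_mem ?_ ih
      rw [ident_D αc (p k) (p (k+1)) (seg β (t k) (t (k+1)) rfl rfl) (q k)]
      refine mul_mem ?_ ?_
      · -- the remainder loop lies in a δ-ball
        apply mem_cutCoveringGroup_of_ball _ _ (β.extend (t k))
        intro s
        show (if (s:ℝ) ≤ 1/2 then (q k).symm.extend (2*s)
          else (seg β (t k) (t (k+1)) rfl rfl).extend (2*(s:ℝ)-1)) ∈ _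
        split_ifs with hcase
        · show (q k).symm (Set.projIcc (0:ℝ) 1 zero_le_one _) ∈ _
          rw [Path.symm_apply]
          exact hqball k _
        · show (seg β (t k) (t (k+1)) rfl rfl) (Set.projIcc (0:ℝ) 1 zero_le_one _) ∈ _
          rw [seg_apply]
          rw [Metric.mem_ball]
          have hfi := hfine (t k + ((Set.projIcc (0:ℝ) 1 zero_le_one (2*(s:ℝ)-1) : I) : ℝ)
            * (t (k+1) - t k)) (t k) ?_
          · exact lt_of_lt_of_le hfi hεδ
          · rw [hstep k]
            have hu1 : (0:ℝ) ≤ ((Set.projIcc (0:ℝ) 1 zero_le_one (2*(s:ℝ)-1) : I) : ℝ) :=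
              (Set.projIcc (0:ℝ) 1 zero_le_one (2*(s:ℝ)-1)).2.1
            have hu2 : ((Set.projIcc (0:ℝ) 1 zero_le_one (2*(s:ℝ)-1) : I) : ℝ) ≤ 1 :=
              (Set.projIcc (0:ℝ) 1 zero_le_one (2*(s:ℝ)-1)).2.2
            rw [show t k + ((Set.projIcc (0:ℝ) 1 zero_le_one (2*(s:ℝ)-1) : I) : ℝ)
                * (1/(n:ℝ)) - t k
              = ((Set.projIcc (0:ℝ) 1 zero_le_one (2*(s:ℝ)-1) : I) : ℝ) * (1/(n:ℝ)) by ring]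
            rw [abs_of_nonneg (by positivity)]
            calc _ ≤ 1 * (1/(n:ℝ)) := by
                  apply mul_le_mul_of_nonneg_right hu2 (by positivity)
              _ = 1/(n:ℝ) := one_mul _
      · -- the short rectifiable loop
        apply hcon
        have hb1 := pathLength_trans_le (q k) (p (k+1)).symm
        have hb2 := pathLength_trans_le (p k) ((q k).trans (p (k+1)).symm)
        rw [pathLength_symm] at hb1
        calc pathLength _ ≤ pathLength (p k) + (pathLength (q k) + pathLength (p (k+1))) := by
              exact le_trans hb2 (add_le_add_right hb1 _)
          _ < ENNReal.ofReal (δ' + ε) + (ENNReal.ofReal ε + ENNReal.ofReal (δ' + ε)) :=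
              ENNReal.add_lt_add (hp k) (ENNReal.add_lt_add (hq k) (hp (k+1)))
          _ = ENNReal.ofReal ((δ' + ε) + (ε + (δ' + ε))) := by
              rw [← ENNReal.ofReal_add hεpos.le haux.le,
                ← ENNReal.ofReal_add haux.le (by linarith : (0:ℝ) ≤ ε + (δ' + ε))]
          _ ≤ ENNReal.ofReal (2 * δ'') := ENNReal.ofReal_le_ofReal (by linarith)
  -- identify the final loop with the conjugated β
  have hCnL : ((p 0).trans (seg β (t 0) (t n) rfl rfl)).trans (p n).symm
      = (pc0.trans β).trans pcn.symm := by
    apply Path.eq_of_fun_eq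
    apply trans_fun_congr
    · apply trans_fun_congr
      · intro s
        rw [hpc0, Path.cast_coe]
      · intro s
        rw [seg_apply]
        rw [show t 0 + (s:ℝ)*(t n - t 0) = (s:ℝ) by
          rw [show t 0 = 0 by simp [htdef], show t n = 1 by rw [htdef]; field_simp]; ring]
        exact β.extend_extends' s
    · intro s
      rw [Path.symm_apply, Path.symm_apply, hpcn, Path.cast_coe]
  have hu : loopClass αc ((pc0.trans β).trans pcn.symm) ∈ cutCoveringGroup X x δ R := by
    rw [← hCnL]
    exact hmem n
  have hsshort : loopClass αc (pc0.trans pcn.symm) ∈ cutCoveringGroup X x δ R := by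
    apply hcon
    have hb1 := pathLength_trans_le pc0 pcn.symm
    rw [pathLength_symm, hpc0, hpcn, pathLength_cast, pathLength_cast] at hb1
    calc pathLength _ ≤ pathLength (p 0) + pathLength (p n) := hb1
      _ < ENNReal.ofReal (δ' + ε) + ENNReal.ofReal (δ' + ε) :=
          ENNReal.add_lt_add (hp 0) (hp n)
      _ = ENNReal.ofReal ((δ' + ε) + (δ' + ε)) := by rw [ENNReal.ofReal_add haux.le haux.le]
      _ ≤ ENNReal.ofReal (2 * δ'') := ENNReal.ofReal_le_ofReal (by linarith)
  have hfinal : loopClass (αc.trans pc0) β ∈ cutCoveringGroup X x δ R := by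
    rw [ident_final αc pc0 pcn β]
    exact mul_mem (inv_mem hsshort) hu
  exact (loopClass_mem_iff (αc.trans pc0) α β).1 hfinal
end Core

/-- In a complete locally compact length space, if
`δ ∈ CovSpec^R_cut(X,x)` then there are `δ_j` strictly decreasing to `δ` and
rectifiable loops `σ_j` of length `< 2δ_j` whose classes (conjugated back to the
basepoint) do not lie in `π₁^{cut}(X,δ,R,x)`. -/
theorem exists_short_loops_of_mem_cutCovSpec
    {X : Type*} [MetricSpace X] [CompleteSpace X] [LocallyCompactSpace X]
    (hX : IsLengthSpace X) (x : X) (R δ : ℝ) (hR : 0 < R)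
    (hδ : δ ∈ cutCovSpec X x R) :
    ∃ δseq : ℕ → ℝ, StrictAnti δseq ∧ (∀ j, δ < δseq j) ∧
      Tendsto δseq atTop (nhds δ) ∧
      ∀ j, ∃ (y : X) (τ : Path y y) (α : Path x y),
        pathLength τ < ENNReal.ofReal (2 * δseq j) ∧
        loopClass α τ ∉ cutCoveringGroup X x δ R := by
  obtain ⟨hδpos, hspec⟩ := hδ
  have hhalf : (0:ℝ) < 1/2 := by norm_num
  have hhalf1 : (1:ℝ)/2 < 1 := by norm_num
  refine ⟨fun j => δ + (1/2)^j, ?_, ?_, ?_, ?_⟩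
  · intro a b hab
    have := pow_lt_pow_right_of_lt_one₀ hhalf hhalf1 hab
    simpa using this
  · intro j
    have : (0:ℝ) < (1/2)^j := by positivity
    linarith
  · have h0 := tendsto_pow_atTop_nhds_zero_of_lt_one (by norm_num : (0:ℝ) ≤ 1/2) hhalf1
    have := h0.const_add δ
    simpa using this
  · intro j
    set δ' : ℝ := δ + (1/2)^(j+1) with hδ'def
    have hδ'gt : δ < δ' := by
      have : (0:ℝ) < (1/2)^(j+1) := by positivity
      rw [hδ'def]; linarith
    have hδ'lt : δ' < δ + (1/2)^j := by
      have := pow_lt_pow_right_of_lt_one₀ hhalf hhalf1 (by omega : j < j+1)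
      rw [hδ'def]; linarith
    obtain ⟨y, β, α, c, hball, hnotmem⟩ :=
      exists_bad_generator (x := x) (R := R) hδ'gt.le (hspec δ' hδ'gt)
    exact core_short_loop hX x hδpos hδ'lt (lt_trans hδpos hδ'gt) β α c hball hnotmem
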